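/- Let a > 1 and λ = 1/2 − 1/(2a). For every x ≥ a, ζ(x) − 1 ≤ (ζ((a+1)/2) − 1) · 2^{-λx}. Consequently, if T ≥ 1 and x ≥ log(m_a T)/(λ log 2), where m_a = ζ((a+1)/2) − 1, and if ζ(x) is a rational number, then the height of ζ(x) is at least T. -/
import Mathlib

/-- The real Riemann zeta function `ζ(x) = ∑_{n ≥ 1} n^{-x}`. -/
noncomputable def realZeta (x : ℝ) : ℝ := ∑' n : ℕ, ((n : ℝ) + 1) ^ (-x)

/-- The height of a rational number `p/q` in lowest terms is `max |p| |q|`. -/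
def qheight (q : ℚ) : ℕ := max q.num.natAbs q.den

lemma summable_shift2 {x : ℝ} (hx : 1 < x) :
    Summable (fun n : ℕ => ((n : ℝ) + 2) ^ (-x)) := by
  have h := (Real.summable_nat_rpow (p := -x)).2 (by linarith)
  have h2 := (summable_nat_add_iff 2).2 h
  refine h2.congr fun n => ?_
  push_cast
  ring_nf

lemma summable_shift1 {x : ℝ} (hx : 1 < x) :
    Summable (fun n : ℕ => ((n : ℝ) + 1) ^ (-x)) := by
  have h := (Real.summable_nat_rpow (p := -x)).2 (by linarith)
  have h2 := (summable_nat_add_iff 1).2 h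
  refine h2.congr fun n => ?_
  push_cast
  ring_nf

lemma zeta_sub_one {x : ℝ} (hx : 1 < x) :
    realZeta x - 1 = ∑' n : ℕ, ((n : ℝ) + 2) ^ (-x) := by
  have hs := summable_shift1 hx
  have h0 := Summable.tsum_eq_zero_add hs
  rw [realZeta, h0]
  norm_num
  exact tsum_congr fun n => by push_cast; ring_nf

/-- Let `a > 1` and `λ = 1/2 − 1/(2a)`.  For every `x ≥ a`,
`ζ(x) − 1 ≤ (ζ((a+1)/2) − 1) · 2^{-λx}`.  Consequently, with
`m_a = ζ((a+1)/2) − 1`, if `T ≥ 1` and `x ≥ log(m_a T)/(λ log 2)` and `ζ(x)` is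
rational, then the height of `ζ(x)` is at least `T`. -/
theorem zeta_height_control (a : ℝ) (ha : 1 < a) :
    (∀ x ≥ a, realZeta x - 1 ≤
      (realZeta ((a + 1) / 2) - 1) * (2 : ℝ) ^ (-((1 / 2 - 1 / (2 * a)) * x))) ∧
    (∀ T : ℝ, 1 ≤ T → ∀ x ≥ a,
      Real.log ((realZeta ((a + 1) / 2) - 1) * T) / ((1 / 2 - 1 / (2 * a)) * Real.log 2)
        ≤ x →
      ∀ q : ℚ, realZeta x = (q : ℝ) → T ≤ (qheight q : ℝ)) := by
  set lam : ℝ := 1 / 2 - 1 / (2 * a) with hlam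
  have ha0 : 0 < a := by linarith
  have hlam_pos : 0 < lam := by
    rw [hlam]
    have : 1 / (2 * a) < 1 / 2 := by
      apply one_div_lt_one_div_of_lt <;> linarith
    linarith
  have hs1 : 1 < (a + 1) / 2 := by linarith
  have hm_eq : realZeta ((a + 1) / 2) - 1 = ∑' n : ℕ, ((n : ℝ) + 2) ^ (-((a + 1) / 2)) :=
    zeta_sub_one hs1
  have hm_pos : 0 < realZeta ((a + 1) / 2) - 1 := by
    rw [hm_eq]
    apply Summable.tsum_pos (summable_shift2 hs1) (fun n => by positivity) 0
    positivity
  have part1 : ∀ x ≥ a, realZeta x - 1 ≤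
      (realZeta ((a + 1) / 2) - 1) * (2 : ℝ) ^ (-(lam * x)) := by
    intro x hx
    have hx1 : 1 < x := lt_of_lt_of_le ha hx
    rw [zeta_sub_one hx1, hm_eq, ← tsum_mul_right]
    apply Summable.tsum_le_tsum _ (summable_shift2 hx1)
      ((summable_shift2 hs1).mul_right _)
    intro n
    have hb : (2 : ℝ) ≤ (n : ℝ) + 2 := le_add_of_nonneg_left n.cast_nonneg
    have hb0 : (0 : ℝ) < (n : ℝ) + 2 := by positivity
    have hxeq : -x = -((1 - lam) * x) + (-(lam * x)) := by ring
    rw [hxeq, Real.rpow_add hb0]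
    apply mul_le_mul
    · apply Real.rpow_le_rpow_of_exponent_le (by linarith)
      rw [neg_le_neg_iff]
      have h1lam : 1 - lam = (a + 1) / (2 * a) := by
        rw [hlam]; field_simp; ring
      rw [h1lam, div_mul_eq_mul_div, div_le_div_iff₀ (by norm_num) (by positivity)]
      nlinarith
    · rw [Real.rpow_neg (by norm_num : (0:ℝ) ≤ 2), Real.rpow_neg (le_of_lt hb0)]
      apply inv_anti₀ (by positivity)
      exact Real.rpow_le_rpow (by norm_num) hb (by positivity)
    · positivity
    · positivity
  refine ⟨part1, ?_⟩
  intro T hT x hx hlog q hq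
  have hT0 : (0:ℝ) < T := by linarith
  have hx1 : 1 < x := lt_of_lt_of_le ha hx
  set m := realZeta ((a + 1) / 2) - 1 with hm
  have hmT : 0 < m * T := by positivity
  have hl2 : 0 < lam * Real.log 2 := by
    have := Real.log_pos (by norm_num : (1:ℝ) < 2)
    positivity
  have h1 : Real.log (m * T) ≤ lam * x * Real.log 2 := by
    have := (div_le_iff₀ hl2).1 hlog
    nlinarith
  have h2 : m * T ≤ (2 : ℝ) ^ (lam * x) := by
    have hlr := Real.log_rpow (by norm_num : (0:ℝ) < 2) (lam * x)
    rw [← Real.log_le_log_iff hmT (by positivity), hlr]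
    linarith
  have h3 : m * (2 : ℝ) ^ (-(lam * x)) ≤ 1 / T := by
    rw [Real.rpow_neg (by norm_num : (0:ℝ) ≤ 2), ← div_eq_mul_inv,
      div_le_div_iff₀ (by positivity) hT0]
    linarith
  -- rational side
  have hzpos : 0 < realZeta x - 1 := by
    rw [zeta_sub_one hx1]
    apply Summable.tsum_pos (summable_shift2 hx1) (fun n => by positivity) 0
    positivity
  have hq1 : 1 < (q : ℝ) := by rw [← hq]; linarith
  have hden0 : (0:ℝ) < (q.den : ℝ) := by exact_mod_cast q.pos
  have hcast : (q : ℝ) = (q.num : ℝ) / (q.den : ℝ) := by rw [Rat.cast_def]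
  have hnd : (q.den : ℝ) < (q.num : ℝ) := by
    rw [hcast, lt_div_iff₀ hden0] at hq1
    linarith
  have hndZ : (q.den : ℤ) < q.num := by exact_mod_cast hnd
  have hge1 : (1 : ℝ) ≤ (q.num : ℝ) - (q.den : ℝ) := by
    have : (q.den : ℤ) + 1 ≤ q.num := hndZ
    have h' : ((q.den : ℤ) : ℝ) + 1 ≤ ((q.num : ℤ) : ℝ) := by exact_mod_cast this
    push_cast at h'
    linarith
  have hsub : 1 / (q.den : ℝ) ≤ (q : ℝ) - 1 := by
    have heq : (q : ℝ) - 1 = ((q.num : ℝ) - (q.den : ℝ)) / (q.den : ℝ) := by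
      rw [hcast]; field_simp
    rw [heq]
    gcongr
  have hh0 : (0:ℝ) < (qheight q : ℝ) := by
    have : q.den ≤ qheight q := le_max_right _ _
    have := q.pos
    exact_mod_cast lt_of_lt_of_le q.pos (le_max_right _ _)
  have hhd : 1 / (qheight q : ℝ) ≤ 1 / (q.den : ℝ) := by
    apply one_div_le_one_div_of_le hden0
    exact_mod_cast le_max_right _ _
  have hchain : 1 / (qheight q : ℝ) ≤ 1 / T := by
    calc 1 / (qheight q : ℝ) ≤ 1 / (q.den : ℝ) := hhd
      _ ≤ (q : ℝ) - 1 := hsub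
      _ = realZeta x - 1 := by rw [hq]
      _ ≤ m * (2 : ℝ) ^ (-(lam * x)) := part1 x hx
      _ ≤ 1 / T := h3
  rw [div_le_div_iff₀ hh0 hT0] at hchain
  linarith
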